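/- Let b ∈ M_{m×n}(K) be of rank 0 or 1. Then the Lie algebra (M_{n×m}(K), ⟦x,y⟧ = xby − ybx) is solvable. -/
import Mathlib

lemma rank_le_one_decomp {K : Type*} [Field K] {m n : ℕ}
    (b : Matrix (Fin m) (Fin n) K) (hrank : b.rank = 0 ∨ b.rank = 1) :
    ∃ (u : Fin m → K) (v : Fin n → K), b = Matrix.vecMulVec u v := by
  have hle : Module.finrank K (LinearMap.range b.mulVecLin) ≤ 1 := by
    rcases hrank with h | h <;> rw [Matrix.rank] at h <;> omega
  rw [Submodule.finrank_le_one_iff_isPrincipal] at hle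
  obtain ⟨u, hu⟩ := hle
  have hcol : ∀ j : Fin n, ∃ c : K, (fun i => b i j) = c • u := by
    intro j
    have hmem : b.mulVec (Pi.single j 1) ∈ LinearMap.range b.mulVecLin :=
      ⟨Pi.single j 1, rfl⟩
    rw [hu, Submodule.mem_span_singleton] at hmem
    obtain ⟨c, hc⟩ := hmem
    refine ⟨c, ?_⟩
    rw [hc]
    ext i
    simp [Matrix.mulVec_single]
  choose c hc using hcol
  refine ⟨u, c, ?_⟩
  ext i j
  have := congrFun (hc j) i
  simp only [Pi.smul_apply, smul_eq_mul] at this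
  rw [Matrix.vecMulVec_apply, this, mul_comm]

/-- If `b ∈ M_{m×n}(K)` has rank `0` or `1`, then the Lie algebra
`(M_{n×m}(K), ⟦x,y⟧ = xby − ybx)` is solvable: its derived series
terminates, `g⁽³⁾ = 0` (expressed on spanning brackets by bilinearity). -/
theorem solvable_of_rank_le_one {K : Type*} [Field K] [CharZero K] {m n : ℕ}
    (b : Matrix (Fin m) (Fin n) K) (hrank : b.rank = 0 ∨ b.rank = 1)
    (br : Matrix (Fin n) (Fin m) K → Matrix (Fin n) (Fin m) K → Matrix (Fin n) (Fin m) K)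
    (hbr : ∀ x y, br x y = x * b * y - y * b * x) :
    ∀ x₁ x₂ x₃ x₄ x₅ x₆ x₇ x₈ : Matrix (Fin n) (Fin m) K,
      br (br (br x₁ x₂) (br x₃ x₄)) (br (br x₅ x₆) (br x₇ x₈)) = 0 := by
  obtain ⟨u, v, rfl⟩ := rank_le_one_decomp b hrank
  set B := Matrix.vecMulVec u v with hB
  -- key scalar property: B * x * B = s x • B
  have key : ∀ x : Matrix (Fin n) (Fin m) K, ∃ s : K, B * x * B = s • B := by
    intro x
    refine ⟨∑ k, ∑ l, v k * x k l * u l, ?_⟩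
    ext i j
    simp only [Matrix.mul_apply, Matrix.smul_apply, hB, Matrix.vecMulVec_apply, smul_eq_mul,
      Finset.sum_mul, Finset.mul_sum]
    rw [Finset.sum_comm]
    congr 1; ext l; congr 1; ext k; ring
  -- level 1: B * br x y * B = 0
  have lvl1 : ∀ x y, B * br x y * B = 0 := by
    intro x y
    obtain ⟨sx, hx⟩ := key x
    obtain ⟨sy, hy⟩ := key y
    have h1 : B * (x * B * y) * B = sx • (sy • B) := by
      calc B * (x * B * y) * B = (B * x * B) * (y * B) := by simp only [Matrix.mul_assoc]
      _ = sx • (B * (y * B)) := by rw [hx, Matrix.smul_mul]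
      _ = sx • (sy • B) := by rw [← Matrix.mul_assoc, hy]
    have h2 : B * (y * B * x) * B = sy • (sx • B) := by
      calc B * (y * B * x) * B = (B * y * B) * (x * B) := by simp only [Matrix.mul_assoc]
      _ = sy • (B * (x * B)) := by rw [hy, Matrix.smul_mul]
      _ = sy • (sx • B) := by rw [← Matrix.mul_assoc, hx]
    rw [hbr, Matrix.mul_sub, Matrix.sub_mul, h1, h2, smul_comm sy sx B, sub_self]
  -- level 2
  have lvl2l : ∀ x₁ x₂ x₃ x₄, B * br (br x₁ x₂) (br x₃ x₄) = 0 := by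
    intro x₁ x₂ x₃ x₄
    rw [hbr (br x₁ x₂), Matrix.mul_sub]
    simp only [← Matrix.mul_assoc]
    rw [lvl1, lvl1]; simp
  have lvl2r : ∀ x₁ x₂ x₃ x₄, br (br x₁ x₂) (br x₃ x₄) * B = 0 := by
    intro x₁ x₂ x₃ x₄
    have e1 : br x₁ x₂ * B * br x₃ x₄ * B = br x₁ x₂ * (B * br x₃ x₄ * B) := by
      simp only [Matrix.mul_assoc]
    have e2 : br x₃ x₄ * B * br x₁ x₂ * B = br x₃ x₄ * (B * br x₁ x₂ * B) := by
      simp only [Matrix.mul_assoc]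
    rw [hbr (br x₁ x₂), Matrix.sub_mul, e1, e2, lvl1, lvl1, Matrix.mul_zero, Matrix.mul_zero,
      sub_self]
  intro x₁ x₂ x₃ x₄ x₅ x₆ x₇ x₈
  rw [hbr, lvl2r x₁ x₂ x₃ x₄, lvl2r x₅ x₆ x₇ x₈, Matrix.zero_mul, Matrix.zero_mul, sub_self]
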